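/- Let S ⊆ Ω ⊆ ℝⁿ be finite sets with 0 ∉ aff(Ω), and let d = dim aff(Ω). Then there exists a finite set H ⊆ ℝⁿ such that conv(S) = ⋂_{h ∈ H} {p ∈ aff(Ω) : ⟨p, h⟩ ≥ 0}, and for each h ∈ H there exist d affinely independent elements ω₁,…,ω_d ∈ Ω with ⟨ωᵢ, h⟩ = 0 for all i. -/

import Mathlib

set_option maxHeartbeats 1000000


open Matrix Module Submodule

section DefIneqAux

variable {n : ℕ}

private lemma dot_single_aux (f : Module.Dual ℝ (Fin n → ℝ)) (x : Fin n → ℝ) :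
    x ⬝ᵥ (fun i => f (Pi.single i 1)) = f x := by
  conv_rhs => rw [← Finset.univ_sum_single x]
  rw [map_sum, dotProduct]
  congr 1; ext i
  have h1 : Pi.single i (x i) = x i • (Pi.single i (1:ℝ) : Fin n → ℝ) := by
    rw [← Pi.single_smul, smul_eq_mul, mul_one]
  rw [h1, _root_.map_smul, smul_eq_mul]

private lemma dot_single_aux' (f : (Fin n → ℝ) →L[ℝ] ℝ) (x : Fin n → ℝ) :
    x ⬝ᵥ (fun i => f (Pi.single i 1)) = f x := by
  conv_rhs => rw [← Finset.univ_sum_single x]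
  rw [map_sum, dotProduct]
  congr 1; ext i
  have h1 : Pi.single i (x i) = x i • (Pi.single i (1:ℝ) : Fin n → ℝ) := by
    rw [← Pi.single_smul, smul_eq_mul, mul_one]
  rw [h1, _root_.map_smul, smul_eq_mul]

private lemma exists_perp_aux {W : Submodule ℝ (Fin n → ℝ)} {v : Fin n → ℝ} (hv : v ∉ W) :
    ∃ g : Fin n → ℝ, (∀ w ∈ W, w ⬝ᵥ g = 0) ∧ v ⬝ᵥ g ≠ 0 := by
  obtain ⟨f, hf1, hf2⟩ := W.exists_dual_map_eq_bot_of_notMem hv inferInstance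
  refine ⟨fun i => f (Pi.single i 1), fun w hw => ?_, by rw [dot_single_aux]; exact hf1⟩
  rw [dot_single_aux]
  have : f w ∈ W.map f := Submodule.mem_map_of_mem hw
  rwa [hf2, Submodule.mem_bot] at this

private lemma li_aff_aux {ι : Type*} {v : ι → (Fin n → ℝ)} (h : LinearIndependent ℝ v) :
    AffineIndependent ℝ v := by
  rw [affineIndependent_iff]
  intro s w _ hsum i hi
  exact linearIndependent_iff'.1 h s w hsum i hi

private lemma sep_aux {S : Set (Fin n → ℝ)} (hS : S.Finite) {p u : Fin n → ℝ}
    (hu : ∀ s ∈ S, s ⬝ᵥ u = 1) (hpu : p ⬝ᵥ u = 1) (hp : p ∉ convexHull ℝ S) :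
    ∃ h : Fin n → ℝ, (∀ s ∈ S, 0 ≤ s ⬝ᵥ h) ∧ p ⬝ᵥ h < 0 := by
  obtain ⟨f, c, hpc, hcs⟩ := geometric_hahn_banach_point_closed
    (convex_convexHull ℝ S) (hS.isClosed_convexHull ℝ) hp
  refine ⟨(fun i => f (Pi.single i 1)) - c • u, fun s hs => ?_, ?_⟩
  · rw [dotProduct_sub, dotProduct_smul, dot_single_aux', hu s hs, smul_eq_mul, mul_one,
      sub_nonneg]
    exact le_of_lt (hcs s (subset_convexHull ℝ S hs))
  · rw [dotProduct_sub, dotProduct_smul, dot_single_aux', hpu, smul_eq_mul, mul_one, sub_neg]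
    exact hpc

private lemma rot_aux {S Ω : Set (Fin n → ℝ)} (hS : S.Finite) (hSΩ : S ⊆ Ω)
    {d : ℕ} (hVd : finrank ℝ (span ℝ Ω) = d + 1) {p : Fin n → ℝ} (hpV : p ∈ span ℝ Ω) :
    ∀ (k : ℕ) (h : Fin n → ℝ), (∀ s ∈ S, 0 ≤ s ⬝ᵥ h) → p ⬝ᵥ h < 0 →
      d ≤ k + finrank ℝ (span ℝ {ω | ω ∈ Ω ∧ ω ⬝ᵥ h = 0}) →
      ∃ h', (∀ s ∈ S, 0 ≤ s ⬝ᵥ h') ∧ p ⬝ᵥ h' < 0 ∧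
        d ≤ finrank ℝ (span ℝ {ω | ω ∈ Ω ∧ ω ⬝ᵥ h' = 0}) := by
  intro k
  induction k with
  | zero => intro h h1 h2 h3; exact ⟨h, h1, h2, by simpa using h3⟩
  | succ k ih =>
    intro h hval hp hk
    set Z : Set (Fin n → ℝ) := {ω | ω ∈ Ω ∧ ω ⬝ᵥ h = 0} with hZdef
    by_cases hdone : d ≤ finrank ℝ (span ℝ Z)
    · exact ⟨h, hval, hp, hdone⟩
    push_neg at hdone
    set W : Submodule ℝ (Fin n → ℝ) := span ℝ Z with hWdef
    set U : Submodule ℝ (Fin n → ℝ) := W ⊔ span ℝ {p} with hUdef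
    have hpU : p ∈ U := Submodule.mem_sup_right (Submodule.mem_span_singleton_self p)
    have hWU : W ≤ U := le_sup_left
    have hUd : finrank ℝ U ≤ d := by
      have h1 := Submodule.finrank_sup_add_finrank_inf_eq W (span ℝ {p})
      have h2 : finrank ℝ (span ℝ ({p} : Set (Fin n → ℝ))) ≤ 1 := by
        rcases eq_or_ne p 0 with rfl | hp0
        · rw [Submodule.span_zero_singleton]; simp
        · rw [finrank_span_singleton hp0]
      rw [← hUdef] at h1
      omega
    have hΩU : ¬ (Ω ⊆ U) := by
      intro hsub
      have : span ℝ Ω ≤ U := Submodule.span_le.2 hsub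
      have := Submodule.finrank_mono this
      omega
    obtain ⟨ω₀, hω₀Ω, hω₀U⟩ := Set.not_subset.1 hΩU
    obtain ⟨g, hgU, hb⟩ := exists_perp_aux hω₀U
    have hω₀W : ω₀ ∉ W := fun hmem => hω₀U (hWU hmem)
    set a := ω₀ ⬝ᵥ h with hadef
    set b := ω₀ ⬝ᵥ g with hbdef
    have ha : a ≠ 0 := by
      intro ha0
      exact hω₀W (Submodule.subset_span ⟨hω₀Ω, ha0⟩)
    set g₂ : Fin n → ℝ := (-(a*b)) • g with hg₂def
    have hg₂U : ∀ w ∈ U, w ⬝ᵥ g₂ = 0 := by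
      intro w hw
      rw [hg₂def, dotProduct_smul, hgU w hw, smul_eq_mul, mul_zero]
    have hω₀g₂ : ω₀ ⬝ᵥ g₂ = -(a*b)*b := by
      rw [hg₂def, dotProduct_smul, smul_eq_mul]
    set t₀ : ℝ := (b*b)⁻¹ with ht₀def
    have ht₀ : 0 < t₀ := by
      rw [ht₀def]; exact inv_pos.2 (mul_self_pos.2 hb)
    have hdott : ∀ (t : ℝ) (x : Fin n → ℝ), x ⬝ᵥ (h + t • g₂) = x ⬝ᵥ h + t * (x ⬝ᵥ g₂) := by
      intro t x
      rw [dotProduct_add, dotProduct_smul, smul_eq_mul]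
    have hcross : ω₀ ⬝ᵥ (h + t₀ • g₂) = 0 := by
      rw [hdott, hω₀g₂, ← hadef, ht₀def]
      field_simp
      ring
    have finish : ∀ (t : ℝ) (x : Fin n → ℝ), x ∈ Ω → x ∉ W →
        x ⬝ᵥ (h + t • g₂) = 0 → (∀ s ∈ S, 0 ≤ s ⬝ᵥ (h + t • g₂)) →
        ∃ h', (∀ s ∈ S, 0 ≤ s ⬝ᵥ h') ∧ p ⬝ᵥ h' < 0 ∧
          d ≤ finrank ℝ (span ℝ {ω | ω ∈ Ω ∧ ω ⬝ᵥ h' = 0}) := by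
      intro t x hxΩ hxW hx0 hvalid
      have hp' : p ⬝ᵥ (h + t • g₂) < 0 := by
        rw [hdott, hg₂U p hpU, mul_zero, add_zero]; exact hp
      set Z' : Set (Fin n → ℝ) := {ω | ω ∈ Ω ∧ ω ⬝ᵥ (h + t • g₂) = 0} with hZ'def
      have hZZ' : Z ⊆ Z' := by
        rintro z ⟨hzΩ, hzh⟩
        refine ⟨hzΩ, ?_⟩
        rw [hdott, hzh, hg₂U z (hWU (Submodule.subset_span ⟨hzΩ, hzh⟩)), mul_zero, add_zero]
      have hlt : W < span ℝ Z' := by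
        refine lt_of_le_of_ne (Submodule.span_mono hZZ') ?_
        intro heq
        exact hxW (heq ▸ Submodule.subset_span (⟨hxΩ, hx0⟩ : x ∈ Z'))
      have hrank := Submodule.finrank_lt_finrank_of_lt hlt
      have hgoal : d ≤ k + finrank ℝ (span ℝ Z') := by omega
      rw [hZ'def] at hgoal
      exact ih (h + t • g₂) hvalid hp' hgoal
    classical
    set B : Finset (Fin n → ℝ) :=
      hS.toFinset.filter (fun s => s ⬝ᵥ g₂ < 0 ∧ s ⬝ᵥ h + t₀ * (s ⬝ᵥ g₂) < 0) with hBdef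
    rcases B.eq_empty_or_nonempty with hBe | hBne
    · refine finish t₀ ω₀ hω₀Ω hω₀W hcross ?_
      intro s hs
      by_contra hneg
      push_neg at hneg
      rw [hdott] at hneg
      have hsg : s ⬝ᵥ g₂ < 0 := by nlinarith [hval s hs]
      have : s ∈ B := by
        rw [hBdef, Finset.mem_filter]
        exact ⟨hS.mem_toFinset.2 hs, hsg, hneg⟩
      rw [hBe] at this
      exact absurd this (Finset.notMem_empty s)
    · obtain ⟨s₁, hs₁B, hmin⟩ := B.exists_min_image (fun s => -(s ⬝ᵥ h)/(s ⬝ᵥ g₂)) hBne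
      rw [hBdef, Finset.mem_filter] at hs₁B
      obtain ⟨hs₁S', hs₁g, hs₁t₀⟩ := hs₁B
      have hs₁S : s₁ ∈ S := hS.mem_toFinset.1 hs₁S'
      have hs₁h : 0 ≤ s₁ ⬝ᵥ h := hval s₁ hs₁S
      set t₁ : ℝ := -(s₁ ⬝ᵥ h)/(s₁ ⬝ᵥ g₂) with ht₁def
      have ht₁0 : 0 ≤ t₁ := by
        rw [ht₁def, div_nonneg_iff]
        right; constructor <;> linarith
      have ht₁t₀ : t₁ < t₀ := by
        rw [ht₁def, div_lt_iff_of_neg hs₁g]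
        linarith
      have hs₁W : s₁ ∉ W := by
        intro hmem
        rw [hg₂U s₁ (hWU hmem)] at hs₁g
        exact absurd hs₁g (lt_irrefl 0)
      have hcross₁ : s₁ ⬝ᵥ (h + t₁ • g₂) = 0 := by
        have hne : s₁ ⬝ᵥ g₂ ≠ 0 := ne_of_lt hs₁g
        rw [hdott, ht₁def]
        field_simp
        ring
      refine finish t₁ s₁ (hSΩ hs₁S) hs₁W hcross₁ ?_
      intro s hs
      rw [hdott]
      rcases le_or_gt 0 (s ⬝ᵥ g₂) with hsg | hsg
      · have := hval s hs
        nlinarith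
      · by_cases hsB : s ⬝ᵥ h + t₀ * (s ⬝ᵥ g₂) < 0
        · have hsBmem : s ∈ B := by
            rw [hBdef, Finset.mem_filter]
            exact ⟨hS.mem_toFinset.2 hs, hsg, hsB⟩
          have := hmin s hsBmem
          rw [le_div_iff_of_neg hsg] at this
          linarith
        · push_neg at hsB
          nlinarith

private lemma exists_scalar_aux {V W : Submodule ℝ (Fin n → ℝ)} (hWV : W ≤ V) {d : ℕ}
    (hW : finrank ℝ W = d) (hV : finrank ℝ V = d + 1) {h₁ h₂ : Fin n → ℝ}
    (hk₁ : ∀ w ∈ W, w ⬝ᵥ h₁ = 0) (hk₂ : ∀ w ∈ W, w ⬝ᵥ h₂ = 0)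
    {v₂ : Fin n → ℝ} (hv₂V : v₂ ∈ V) (hv₂ : v₂ ⬝ᵥ h₂ ≠ 0) :
    ∀ x ∈ V, x ⬝ᵥ h₁ = ((v₂ ⬝ᵥ h₁) / (v₂ ⬝ᵥ h₂)) * (x ⬝ᵥ h₂) := by
  have hv₂W : v₂ ∉ W := fun hmem => hv₂ (hk₂ v₂ hmem)
  have hsup : W ⊔ span ℝ {v₂} = V := by
    refine Submodule.eq_of_le_of_finrank_le
      (sup_le hWV ((Submodule.span_singleton_le_iff_mem v₂ V).2 hv₂V)) ?_
    have hlt : W < W ⊔ span ℝ {v₂} := by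
      refine lt_of_le_of_ne le_sup_left ?_
      intro heq
      exact hv₂W (heq ▸ Submodule.mem_sup_right (Submodule.mem_span_singleton_self v₂))
    have := Submodule.finrank_lt_finrank_of_lt hlt
    omega
  intro x hxV
  rw [← hsup] at hxV
  obtain ⟨w, hw, z, hz, rfl⟩ := Submodule.mem_sup.1 hxV
  obtain ⟨c, rfl⟩ := Submodule.mem_span_singleton.1 hz
  rw [add_dotProduct, add_dotProduct, smul_dotProduct, smul_dotProduct,
    hk₁ w hw, hk₂ w hw, smul_eq_mul, smul_eq_mul, zero_add, zero_add]
  field_simp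

end DefIneqAux

/-- Defining inequalities: for finite `S ⊆ Ω ⊆ ℝⁿ` with `0 ∉ aff(Ω)` and
`d = dim aff(Ω)`, the convex hull of `S` is a finite intersection of half-spaces
in `aff(Ω)`, each of whose boundary hyperplane passes through `d` affinely
independent points of `Ω`. -/
theorem defining_inequalities
    (n : ℕ) (S Ω : Set (Fin n → ℝ)) (hS : S.Finite) (hΩ : Ω.Finite) (hSΩ : S ⊆ Ω)
    (h0 : (0 : Fin n → ℝ) ∉ affineSpan ℝ Ω)
    (d : ℕ) (hd : d = Module.finrank ℝ (affineSpan ℝ Ω).direction) :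
    ∃ H : Finset (Fin n → ℝ),
      (convexHull ℝ S = ⋂ h ∈ H, {p : Fin n → ℝ | p ∈ affineSpan ℝ Ω ∧ 0 ≤ p ⬝ᵥ h}) ∧
      ∀ h ∈ H, ∃ ω : Fin d → (Fin n → ℝ),
        (∀ i, ω i ∈ Ω) ∧ AffineIndependent ℝ ω ∧ ∀ i, ω i ⬝ᵥ h = 0 := by
  classical
  rcases Set.eq_empty_or_nonempty Ω with hΩe | ⟨q, hq⟩
  · -- Ω empty
    have hSe : S = ∅ := Set.eq_empty_of_subset_empty (hΩe ▸ hSΩ)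
    have hd0 : d = 0 := by
      rw [hd, hΩe, AffineSubspace.span_empty, AffineSubspace.direction_bot, finrank_bot]
    refine ⟨{0}, ?_, ?_⟩
    · rw [hSe, convexHull_empty]
      symm
      rw [Set.eq_empty_iff_forall_notMem]
      intro x hx
      have hmem := Set.mem_iInter₂.1 hx 0 (Finset.mem_singleton_self 0)
      rw [hΩe, AffineSubspace.span_empty] at hmem
      exact AffineSubspace.notMem_bot ℝ _ x hmem.1
    · intro h _
      haveI : Subsingleton (Fin d) := by rw [hd0]; infer_instance
      exact ⟨fun _ => 0, fun i => absurd i.isLt (by omega),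
        affineIndependent_of_subsingleton ℝ _, fun i => absurd i.isLt (by omega)⟩
  · -- Ω nonempty
    have hqA : q ∈ affineSpan ℝ Ω := subset_affineSpan ℝ Ω hq
    set A := affineSpan ℝ Ω with hAdef
    set D := (affineSpan ℝ Ω).direction with hDdef
    set V : Submodule ℝ (Fin n → ℝ) := span ℝ Ω with hVdef
    have hq0 : q ≠ 0 := fun h => h0 (h ▸ hqA)
    have hqD : q ∉ D := by
      intro hqD
      have : (0 : Fin n → ℝ) ∈ A := by
        have := AffineSubspace.vadd_mem_of_mem_direction (neg_mem hqD) hqA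
        simpa using this
      exact h0 this
    have hDV : D ≤ V := by
      rw [hDdef, direction_affineSpan, vectorSpan_def]
      refine Submodule.span_le.2 ?_
      rintro x hx
      obtain ⟨y, hy, z, hz, rfl⟩ := Set.mem_vsub.1 hx
      rw [vsub_eq_sub]
      exact SetLike.mem_coe.2 (V.sub_mem (Submodule.subset_span hy) (Submodule.subset_span hz))
    have hΩV : Ω ⊆ (V : Set (Fin n → ℝ)) := Submodule.subset_span
    have hAV : ∀ x ∈ A, x ∈ V := by
      intro x hx
      have hxq : x - q ∈ D := by
        have := AffineSubspace.vsub_mem_direction hx hqA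
        rwa [vsub_eq_sub] at this
      have hxe : x = (x - q) + q := by rw [sub_add_cancel]
      rw [hxe]
      exact V.add_mem (hDV hxq) (hΩV hq)
    have hVsup : V = D ⊔ span ℝ {q} := by
      apply le_antisymm
      · refine Submodule.span_le.2 ?_
        intro ω hω
        have hωq : ω - q ∈ D := by
          have := AffineSubspace.vsub_mem_direction (subset_affineSpan ℝ Ω hω) hqA
          rwa [vsub_eq_sub] at this
        have hωe : ω = (ω - q) + q := by rw [sub_add_cancel]
        rw [SetLike.mem_coe, hωe]
        exact Submodule.add_mem _ (Submodule.mem_sup_left hωq)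
          (Submodule.mem_sup_right (Submodule.mem_span_singleton_self q))
      · refine sup_le hDV ?_
        rw [Submodule.span_singleton_le_iff_mem]
        exact hΩV hq
    have hVd : finrank ℝ V = d + 1 := by
      have h1 := Submodule.finrank_sup_add_finrank_inf_eq D (span ℝ {q})
      have h2 : D ⊓ span ℝ {q} = ⊥ := by
        rw [eq_bot_iff]
        rintro x hx
        obtain ⟨hxD, hxq⟩ := Submodule.mem_inf.1 hx
        obtain ⟨c, rfl⟩ := Submodule.mem_span_singleton.1 hxq
        rcases eq_or_ne c 0 with rfl | hc
        · simp
        · exfalso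
          apply hqD
          have := D.smul_mem c⁻¹ hxD
          rwa [smul_smul, inv_mul_cancel₀ hc, one_smul] at this
      rw [h2, finrank_bot, add_zero, finrank_span_singleton hq0] at h1
      rw [hVsup, h1, ← hd]
    -- the functional u
    obtain ⟨g₀, hg₀D, hg₀q⟩ := exists_perp_aux hqD
    set u : Fin n → ℝ := (q ⬝ᵥ g₀)⁻¹ • g₀ with hudef
    have hu : ∀ x ∈ A, x ⬝ᵥ u = 1 := by
      intro x hx
      have hxq : x - q ∈ D := by
        have := AffineSubspace.vsub_mem_direction hx hqA
        rwa [vsub_eq_sub] at this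
      have hxg : x ⬝ᵥ g₀ = q ⬝ᵥ g₀ := by
        have h1 : (x - q) ⬝ᵥ g₀ = 0 := hg₀D _ hxq
        rw [sub_dotProduct] at h1
        linarith
      rw [hudef, dotProduct_smul, hxg, smul_eq_mul, inv_mul_cancel₀ hg₀q]
    -- choice of perpendicular vectors for candidate subspaces
    have gexists : ∀ t : Finset (Fin n → ℝ), ∃ g : Fin n → ℝ,
        ((t : Set (Fin n → ℝ)) ⊆ Ω ∧ finrank ℝ (span ℝ (t : Set (Fin n → ℝ))) = d) →
        ((∀ w ∈ span ℝ (t : Set (Fin n → ℝ)), w ⬝ᵥ g = 0) ∧ ∃ v ∈ V, v ⬝ᵥ g ≠ 0) := by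
      intro t
      by_cases ht : (t : Set (Fin n → ℝ)) ⊆ Ω ∧ finrank ℝ (span ℝ (t : Set (Fin n → ℝ))) = d
      · obtain ⟨htΩ, htd⟩ := ht
        have hne : ¬ (V ≤ span ℝ (t : Set (Fin n → ℝ))) := by
          intro hle
          have := Submodule.finrank_mono hle
          omega
        obtain ⟨v, hvV, hvt⟩ := SetLike.not_le_iff_exists.1 hne
        obtain ⟨g, hgt, hvg⟩ := exists_perp_aux hvt
        exact ⟨g, fun _ => ⟨hgt, v, hvV, hvg⟩⟩
      · exact ⟨0, fun hc => absurd hc ht⟩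
    choose gfun hgfun using gexists
    set Pf : (Fin n → ℝ) → Prop := fun h => (∀ s ∈ S, 0 ≤ s ⬝ᵥ h) ∧
        ∃ ω : Fin d → (Fin n → ℝ), (∀ i, ω i ∈ Ω) ∧ AffineIndependent ℝ ω ∧ ∀ i, ω i ⬝ᵥ h = 0
      with hPfdef
    set H : Finset (Fin n → ℝ) :=
      (hΩ.toFinset.powerset.image gfun ∪ hΩ.toFinset.powerset.image (fun t => -gfun t)).filter Pf
      with hHdef
    -- key separation property
    have key : ∀ p, p ∈ A → p ∉ convexHull ℝ S → ∃ hstar ∈ H, p ⬝ᵥ hstar < 0 := by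
      intro p hpA hpc
      obtain ⟨h₁, hval₁, hneg₁⟩ := sep_aux hS
        (fun s hs => hu s (subset_affineSpan ℝ Ω (hSΩ hs))) (hu p hpA) hpc
      obtain ⟨h, hval, hneg, hrank⟩ := rot_aux hS hSΩ hVd (hAV p hpA) d h₁ hval₁ hneg₁
        (Nat.le_add_right d _)
      set Z : Set (Fin n → ℝ) := {ω | ω ∈ Ω ∧ ω ⬝ᵥ h = 0} with hZdef
      have hZΩ : Z ⊆ Ω := fun z hz => hz.1
      obtain ⟨Bs, hBZ, hBspan, hBli⟩ := exists_linearIndependent ℝ Z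
      have hBfin : Bs.Finite := hΩ.subset (hBZ.trans hZΩ)
      haveI := hBfin.fintype
      have hcard : Bs.toFinset.card = finrank ℝ (span ℝ Bs) := (finrank_span_set_eq_card hBli).symm
      have hdle : d ≤ Bs.toFinset.card := by rw [hcard, hBspan]; exact hrank
      obtain ⟨t, htB, htcard⟩ := Finset.exists_subset_card_eq hdle
      have htBs : (t : Set (Fin n → ℝ)) ⊆ Bs := by
        intro x hx
        have hxt : x ∈ t := hx
        have h2 := htB hxt
        rwa [Set.mem_toFinset] at h2
      have hBli' : LinearIndepOn ℝ id Bs := hBli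
      have htli : LinearIndependent ℝ (Subtype.val : ↥(t : Set (Fin n → ℝ)) → (Fin n → ℝ)) :=
        hBli'.mono htBs
      have htd : finrank ℝ (span ℝ (t : Set (Fin n → ℝ))) = d := by
        rw [finrank_span_finset_eq_card htli]
        exact htcard
      have htΩ : (t : Set (Fin n → ℝ)) ⊆ Ω := htBs.trans (hBZ.trans hZΩ)
      obtain ⟨hperp, v₂, hv₂V, hv₂g⟩ := hgfun t ⟨htΩ, htd⟩
      have hht : ∀ w ∈ span ℝ (t : Set (Fin n → ℝ)), w ⬝ᵥ h = 0 := by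
        intro w hw
        have hwZ : w ∈ span ℝ Z := Submodule.span_mono (htBs.trans hBZ) hw
        refine Submodule.span_induction ?_ ?_ ?_ ?_ hwZ
        · rintro z ⟨_, hz0⟩
          exact hz0
        · exact zero_dotProduct h
        · intro a b _ _ ha hb
          rw [add_dotProduct, ha, hb, add_zero]
        · intro c a _ hca
          rw [smul_dotProduct, hca, smul_zero]
      have htV : span ℝ (t : Set (Fin n → ℝ)) ≤ V := by
        apply Submodule.span_le.2
        exact fun x hx => hΩV (htΩ hx)
      have hscal := exists_scalar_aux htV htd hVd hht hperp hv₂V hv₂g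
      set μ := (v₂ ⬝ᵥ h) / (v₂ ⬝ᵥ gfun t) with hμdef
      have hpV : p ∈ V := hAV p hpA
      have hpμ : p ⬝ᵥ h = μ * (p ⬝ᵥ gfun t) := hscal p hpV
      have hμ0 : μ ≠ 0 := by
        intro h0'
        rw [h0', zero_mul] at hpμ
        rw [hpμ] at hneg
        exact absurd hneg (lt_irrefl 0)
      have htpow : t ∈ hΩ.toFinset.powerset := by
        rw [Finset.mem_powerset]
        intro x hx
        exact hΩ.mem_toFinset.2 (htΩ (Finset.mem_coe.2 hx))
      -- the affinely independent family
      have hωfam : ∃ ω : Fin d → (Fin n → ℝ), (∀ i, ω i ∈ Ω) ∧ AffineIndependent ℝ ω ∧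
          (∀ i, ω i ∈ span ℝ (t : Set (Fin n → ℝ))) := by
        have hcardt : Fintype.card {x // x ∈ t} = d := by rw [Fintype.card_coe, htcard]
        set e : Fin d ≃ {x // x ∈ t} := (Fintype.equivFinOfCardEq hcardt).symm with hedef
        have hinj : Function.Injective
            (fun i : Fin d => (⟨(e i : Fin n → ℝ), Finset.mem_coe.2 (e i).2⟩ :
              (t : Set (Fin n → ℝ)))) := by
          intro i j hij
          apply e.injective
          exact Subtype.ext (congrArg Subtype.val hij)
        have hli2 := htli.comp _ hinj
        exact ⟨fun i => (e i : Fin n → ℝ), fun i => htΩ (Finset.mem_coe.2 (e i).2),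
          li_aff_aux hli2, fun i => Submodule.subset_span (Finset.mem_coe.2 (e i).2)⟩
      obtain ⟨ω, hω1, hω2, hω3⟩ := hωfam
      rcases lt_or_gt_of_ne hμ0 with hμneg | hμpos
      · refine ⟨-gfun t, ?_, ?_⟩
        · rw [hHdef, Finset.mem_filter]
          refine ⟨Finset.mem_union_right _ (Finset.mem_image.2 ⟨t, htpow, rfl⟩), ?_, ω, hω1, hω2, ?_⟩
          · intro s hs
            have hsV : s ∈ V := hΩV (hSΩ hs)
            have hseq := hscal s hsV
            have hsh := hval s hs
            rw [dotProduct_neg]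
            by_contra hcon
            push_neg at hcon
            have hpos : 0 < s ⬝ᵥ gfun t := by linarith
            have : μ * (s ⬝ᵥ gfun t) < 0 := mul_neg_of_neg_of_pos hμneg hpos
            linarith
          · intro i
            rw [dotProduct_neg, hperp _ (hω3 i), neg_zero]
        · rw [dotProduct_neg, neg_lt_zero]
          by_contra hcon
          push_neg at hcon
          nlinarith [mul_nonneg (neg_nonneg.2 hμneg.le) (neg_nonneg.2 hcon), hpμ, hneg]
      · refine ⟨gfun t, ?_, ?_⟩
        · rw [hHdef, Finset.mem_filter]
          refine ⟨Finset.mem_union_left _ (Finset.mem_image.2 ⟨t, htpow, rfl⟩), ?_, ω, hω1, hω2, ?_⟩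
          · intro s hs
            have hsV : s ∈ V := hΩV (hSΩ hs)
            have hseq := hscal s hsV
            have hsh := hval s hs
            by_contra hcon
            push_neg at hcon
            have : μ * (s ⬝ᵥ gfun t) < 0 := mul_neg_of_pos_of_neg hμpos hcon
            linarith
          · intro i
            exact hperp _ (hω3 i)
        · by_contra hcon
          push_neg at hcon
          have : 0 ≤ μ * (p ⬝ᵥ gfun t) := mul_nonneg hμpos.le hcon
          rw [← hpμ] at this
          linarith
    -- H is nonempty
    have hHne : H.Nonempty := by
      by_cases hAc : ∀ pa ∈ A, pa ∈ convexHull ℝ S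
      · -- A ⊆ conv S forces d = 0
        have hd0 : d = 0 := by
          by_contra hd0
          have hDbot : D ≠ ⊥ := by
            intro hDb
            exact hd0 (by rw [hd, hDb, finrank_bot])
          obtain ⟨v, hvD, hv0⟩ := Submodule.exists_mem_ne_zero_of_ne_bot hDbot
          obtain ⟨R, hR⟩ := isBounded_iff_forall_norm_le.1 (hS.isCompact_convexHull ℝ).isBounded
          have hvpos : (0:ℝ) < ‖v‖ := norm_pos_iff.2 hv0
          set tt : ℝ := (|R| + ‖q‖ + 1) / ‖v‖ with httdef
          have htt : 0 < tt := by positivity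
          have hmem : tt • v + q ∈ A := by
            have := AffineSubspace.vadd_mem_of_mem_direction (D.smul_mem tt hvD) hqA
            simpa using this
          have hble := hR _ (hAc _ hmem)
          have h1 : ‖tt • v‖ ≤ ‖tt • v + q‖ + ‖q‖ := by
            have := norm_sub_le (tt • v + q) q
            simpa using this
          rw [norm_smul, Real.norm_eq_abs, abs_of_pos htt] at h1
          have h2 : tt * ‖v‖ = |R| + ‖q‖ + 1 := by
            rw [httdef, div_mul_cancel₀]
            exact ne_of_gt hvpos
          have := le_abs_self R
          linarith
        have hDb : D = ⊥ := by
          have : finrank ℝ D = 0 := by rw [← hd, hd0]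
          exact Submodule.finrank_eq_zero.1 this
        have hAq : ∀ x ∈ A, x = q := by
          intro x hx
          have hxq : x - q ∈ D := by
            have := AffineSubspace.vsub_mem_direction hx hqA
            rwa [vsub_eq_sub] at this
          rw [hDb, Submodule.mem_bot, sub_eq_zero] at hxq
          exact hxq
        obtain ⟨hperpe, v, hvV, hvg⟩ := hgfun ∅
          ⟨by simp, by rw [Finset.coe_empty, Submodule.span_empty, finrank_bot, hd0]⟩
        have hΩq : Ω ⊆ {q} := fun ω hω => hAq ω (subset_affineSpan ℝ Ω hω)
        have hqg : q ⬝ᵥ gfun ∅ ≠ 0 := by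
          have hVq : V ≤ span ℝ {q} := Submodule.span_le.2 (fun x hx =>
            Submodule.subset_span (hΩq hx))
          obtain ⟨c, hc⟩ := Submodule.mem_span_singleton.1 (hVq hvV)
          intro hq0'
          apply hvg
          rw [← hc, smul_dotProduct, hq0', smul_eq_mul, mul_zero]
        have hepow : (∅ : Finset (Fin n → ℝ)) ∈ hΩ.toFinset.powerset := by
          rw [Finset.mem_powerset]; exact Finset.empty_subset _
        haveI : Subsingleton (Fin d) := by rw [hd0]; infer_instance
        have hqS : ∀ s ∈ S, s = q := fun s hs => hAq s (subset_affineSpan ℝ Ω (hSΩ hs))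
        rcases lt_or_gt_of_ne hqg with hneg | hpos
        · refine ⟨-gfun ∅, ?_⟩
          rw [hHdef, Finset.mem_filter]
          refine ⟨Finset.mem_union_right _ (Finset.mem_image.2 ⟨∅, hepow, rfl⟩), ?_,
            fun _ => q, fun i => absurd i.isLt (by omega),
            affineIndependent_of_subsingleton ℝ _, fun i => absurd i.isLt (by omega)⟩
          intro s hs
          rw [hqS s hs, dotProduct_neg, le_neg, neg_zero]
          exact hneg.le
        · refine ⟨gfun ∅, ?_⟩
          rw [hHdef, Finset.mem_filter]
          refine ⟨Finset.mem_union_left _ (Finset.mem_image.2 ⟨∅, hepow, rfl⟩), ?_,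
            fun _ => q, fun i => absurd i.isLt (by omega),
            affineIndependent_of_subsingleton ℝ _, fun i => absurd i.isLt (by omega)⟩
          intro s hs
          rw [hqS s hs]
          exact hpos.le
      · push_neg at hAc
        obtain ⟨p₀, hp₀A, hp₀c⟩ := hAc
        obtain ⟨hstar, hmem, _⟩ := key p₀ hp₀A hp₀c
        exact ⟨hstar, hmem⟩
    refine ⟨H, ?_, ?_⟩
    · apply Set.Subset.antisymm
      · intro x hx
        refine Set.mem_iInter₂.2 (fun h hh => ?_)
        have hxA : x ∈ A := affineSpan_mono ℝ hSΩ (convexHull_subset_affineSpan S hx)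
        refine ⟨hxA, ?_⟩
        have hPf : Pf h := (Finset.mem_filter.1 hh).2
        have hsub : convexHull ℝ S ⊆ {y : Fin n → ℝ | 0 ≤ y ⬝ᵥ h} := by
          apply convexHull_min
          · exact fun s hs => hPf.1 s hs
          · intro y hy z hz a b ha hb hab
            simp only [Set.mem_setOf_eq] at *
            rw [add_dotProduct, smul_dotProduct, smul_dotProduct, smul_eq_mul, smul_eq_mul]
            have h1 := mul_nonneg ha hy
            have h2 := mul_nonneg hb hz
            linarith
        exact hsub hx
      · intro x hx
        by_contra hxc
        have hxA : x ∈ A := by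
          obtain ⟨h₀, hh₀⟩ := hHne
          exact (Set.mem_iInter₂.1 hx h₀ hh₀).1
        obtain ⟨hstar, hmem, hneg⟩ := key x hxA hxc
        exact absurd (Set.mem_iInter₂.1 hx hstar hmem).2 (not_le.2 hneg)
    · intro h hh
      exact (Finset.mem_filter.1 hh).2.2
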